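/- Let N ≥ 2, let c_1,…,c_N be positive real numbers with c = min_{1≤i≤N} c_i, and let ν_1,…,ν_N be positive integers. Then for every x ∈ ℝ^N with x_1 + ⋯ + x_N = 0 one has ∑_{i=1}^N c_i e^{−ν_i x_i} ≥ c·exp((N−1)^{-1}·‖x‖_∞). -/

import Mathlib

open Finset Real

theorem sum_exp_lower_bound (N : ℕ) (hN : 2 ≤ N) (c : Fin N → ℝ)
    (hc : ∀ i, 0 < c i) (ν : Fin N → ℕ) (hν : ∀ i, 0 < ν i)
    (x : Fin N → ℝ) (hx : ∑ i, x i = 0) :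
    (Finset.univ.inf' ⟨⟨0, by omega⟩, Finset.mem_univ _⟩ c) *
      Real.exp (((N : ℝ) - 1)⁻¹ * ‖x‖) ≤
    ∑ i, c i * Real.exp (-(ν i : ℝ) * x i) := by
  have hn1 : (1:ℝ) ≤ (N:ℝ) - 1 := by
    have : (2:ℝ) ≤ (N:ℝ) := by exact_mod_cast hN
    linarith
  have hn1pos : (0:ℝ) < (N:ℝ) - 1 := by linarith
  -- j maximizing |x j|
  obtain ⟨j, -, hj⟩ := Finset.exists_max_image Finset.univ (fun i => |x i|)
    ⟨⟨0, by omega⟩, Finset.mem_univ _⟩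
  have hj' : ∀ i, |x i| ≤ |x j| := fun i => hj i (Finset.mem_univ i)
  have hnorm : ‖x‖ = |x j| := by
    apply le_antisymm
    · apply pi_norm_le_iff_of_nonneg (abs_nonneg _) |>.2
      intro i; rw [Real.norm_eq_abs]; exact hj' i
    · rw [← Real.norm_eq_abs]; exact norm_le_pi_norm x j
  have habs : (0:ℝ) ≤ |x j| := abs_nonneg _
  set t : ℝ := ((N:ℝ) - 1)⁻¹ * ‖x‖ with ht
  have ht0 : 0 ≤ t := mul_nonneg (by positivity) (norm_nonneg _)
  -- find i with x i ≤ -t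
  have key : ∃ i, x i ≤ -t := by
    rcases le_or_gt (x j) 0 with h | h
    · refine ⟨j, ?_⟩
      have : x j = -|x j| := by rw [abs_of_nonpos h]; ring
      rw [this, ht, hnorm, neg_le_neg_iff]
      calc ((N:ℝ)-1)⁻¹ * |x j| ≤ 1 * |x j| := by
            apply mul_le_mul_of_nonneg_right _ habs
            exact inv_le_one_of_one_le₀ hn1
        _ = |x j| := one_mul _
    · have hxj : |x j| = x j := abs_of_pos h
      have hs : ∑ i ∈ Finset.univ.erase j, x i = -x j := by
        have := Finset.add_sum_erase Finset.univ x (Finset.mem_univ j)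
        linarith [hx, this]
      have hcard : ((Finset.univ.erase j).card : ℝ) = (N:ℝ) - 1 := by
        rw [Finset.card_erase_of_mem (Finset.mem_univ j)]
        simp [Fintype.card_fin]
        have : 1 ≤ N := by omega
        push_cast [Nat.cast_sub this]
        ring
      have hne : (Finset.univ.erase j).Nonempty := by
        rw [← Finset.card_pos]
        have := Finset.card_erase_of_mem (Finset.mem_univ (α := Fin N) j)
        simp [Fintype.card_fin] at this ⊢
        omega
      obtain ⟨i, -, hi⟩ := Finset.exists_le_of_sum_le hne
        (le_of_eq (show ∑ i ∈ Finset.univ.erase j, x i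
          = ∑ _i ∈ Finset.univ.erase j, (-x j / ((N:ℝ)-1)) by
            rw [Finset.sum_const, nsmul_eq_mul, hcard, hs]
            field_simp))
      refine ⟨i, hi.trans (le_of_eq ?_)⟩
      rw [ht, hnorm, hxj]
      field_simp
  obtain ⟨i, hi⟩ := key
  have hterm : c i * Real.exp (-(ν i : ℝ) * x i) ≤ ∑ k, c k * Real.exp (-(ν k : ℝ) * x k) :=
    Finset.single_le_sum (f := fun k => c k * Real.exp (-(ν k : ℝ) * x k))
      (fun k _ => mul_nonneg (hc k).le (Real.exp_pos _).le) (Finset.mem_univ i)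
  refine le_trans ?_ hterm
  have h1 : Finset.univ.inf' ⟨⟨0, by omega⟩, Finset.mem_univ _⟩ c ≤ c i :=
    Finset.inf'_le c (Finset.mem_univ i)
  have h2 : Real.exp t ≤ Real.exp (-(ν i : ℝ) * x i) := by
    apply Real.exp_le_exp.2
    have hν1 : (1:ℝ) ≤ (ν i : ℝ) := by exact_mod_cast hν i
    nlinarith [hi, ht0]
  calc Finset.univ.inf' ⟨⟨0, by omega⟩, Finset.mem_univ _⟩ c * Real.exp t
      ≤ c i * Real.exp t := mul_le_mul_of_nonneg_right h1 (Real.exp_pos _).le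
    _ ≤ c i * Real.exp (-(ν i : ℝ) * x i) :=
        mul_le_mul_of_nonneg_left h2 (hc i).le
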